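/- For any function f : E → [0,∞], (inf_{x∈E} f(x)) · (sup_{y∈E} f^Γ(y)) = 1, where the conventions ∞·0 = 0·∞ = 1 are used. Furthermore, if f is upper radial, then also (sup_{x∈E} f(x)) · (inf_{y∈E} f^Γ(y)) = 1. -/

import Mathlib

open Set
open scoped ENNReal RealInnerProductSpace

noncomputable section

variable {E : Type*} [NormedAddCommGroup E] [InnerProductSpace ℝ E] [FiniteDimensional ℝ E]

/-- The perspective function `f^p(y,v) = v·f(y/v)` (for `v > 0`). -/
def persp (f : E → ℝ≥0∞) (y : E) (v : ℝ) : ℝ≥0∞ := ENNReal.ofReal v * f (v⁻¹ • y)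

/-- The upper radial transformation `f^Γ(y) = sup{v > 0 : v·f(y/v) ≤ 1}` (`sup ∅ = 0`). -/
def radSup (f : E → ℝ≥0∞) (y : E) : ℝ≥0∞ :=
  ⨆ (v : ℝ) (_ : 0 < v) (_ : persp f y v ≤ 1), ENNReal.ofReal v

/-- `f` is upper radial: every `f^p(y,·)` is nondecreasing and upper semicontinuous on `ℝ₊₊`. -/
def UpperRadial (f : E → ℝ≥0∞) : Prop :=
  ∀ y : E, MonotoneOn (persp f y) (Ioi (0 : ℝ)) ∧
    UpperSemicontinuousOn (persp f y) (Ioi (0 : ℝ))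

/-- Multiplication on `[0,∞]` with the conventions `∞·0 = 0·∞ = 1`. -/
def mulConv (a b : ℝ≥0∞) : ℝ≥0∞ :=
  if (a = 0 ∧ b = ⊤) ∨ (a = ⊤ ∧ b = 0) then 1 else a * b

lemma mulConv_inv (a : ℝ≥0∞) : mulConv a a⁻¹ = 1 := by
  rcases eq_or_ne a 0 with rfl | h0
  · simp [mulConv]
  rcases eq_or_ne a ⊤ with rfl | htop
  · simp [mulConv]
  · rw [mulConv, if_neg (by simp [h0, htop, ENNReal.inv_eq_zero]),
      ENNReal.mul_inv_cancel h0 htop]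

omit [FiniteDimensional ℝ E] in
lemma smul_inv_smul' {c : ℝ} (hc : c ≠ 0) (x : E) : c⁻¹ • c • x = x := by
  rw [smul_smul, inv_mul_cancel₀ hc, one_smul]

omit [FiniteDimensional ℝ E] in
lemma sup_radSup (f : E → ℝ≥0∞) : (⨆ y : E, radSup f y) = (⨅ x : E, f x)⁻¹ := by
  set m := ⨅ x : E, f x with hm
  apply le_antisymm
  · refine iSup_le fun y => ?_
    refine iSup_le fun v => iSup_le fun hv => iSup_le fun hp => ?_
    rw [ENNReal.le_inv_iff_mul_le]
    calc ENNReal.ofReal v * m ≤ ENNReal.ofReal v * f (v⁻¹ • y) :=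
          mul_le_mul_right (iInf_le _ _) _
      _ ≤ 1 := hp
  · refine le_of_forall_lt fun c hc => ?_
    obtain ⟨d, hcd, hdm⟩ := exists_between hc
    have hd0 : d ≠ 0 := (zero_le.trans_lt hcd).ne'
    have hdtop : d ≠ ⊤ := hdm.ne_top
    -- m < d⁻¹
    have hmd : m < d⁻¹ := ENNReal.lt_inv_iff_lt_inv.mp hdm
    obtain ⟨x, hx⟩ := iInf_lt_iff.mp hmd
    have hdf : d * f x ≤ 1 := by
      have : d * f x < d * d⁻¹ := ENNReal.mul_lt_mul_right hd0 hdtop hx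
      rw [ENNReal.mul_inv_cancel hd0 hdtop] at this
      exact this.le
    set v : ℝ := d.toReal with hv
    have hv0 : 0 < v := ENNReal.toReal_pos hd0 hdtop
    have hvd : ENNReal.ofReal v = d := ENNReal.ofReal_toReal hdtop
    have hp : persp f (v • x) v ≤ 1 := by
      rw [persp, smul_inv_smul' hv0.ne' x, hvd]; exact hdf
    calc c < d := hcd
      _ = ENNReal.ofReal v := hvd.symm
      _ ≤ radSup f (v • x) := by
          rw [radSup]
          exact le_iSup_of_le v (le_iSup_of_le hv0 (le_iSup_of_le hp le_rfl))
      _ ≤ ⨆ y : E, radSup f y := le_iSup _ _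

omit [FiniteDimensional ℝ E] in
lemma inf_radSup (f : E → ℝ≥0∞) (hmono : ∀ y : E, MonotoneOn (persp f y) (Ioi (0 : ℝ))) :
    (⨅ y : E, radSup f y) = (⨆ x : E, f x)⁻¹ := by
  set M := ⨆ x : E, f x with hM
  apply le_antisymm
  · by_contra h
    push_neg at h
    obtain ⟨d, hMd, hdr⟩ := exists_between h
    have hd0 : d ≠ 0 := (zero_le.trans_lt hMd).ne'
    have hdtop : d ≠ ⊤ := hdr.ne_top
    set c : ℝ := d.toReal with hc
    have hc0 : 0 < c := ENNReal.toReal_pos hd0 hdtop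
    have hcd : ENNReal.ofReal c = d := ENNReal.ofReal_toReal hdtop
    -- for each x, d * f x ≤ 1
    have key : ∀ x : E, d * f x ≤ 1 := by
      intro x
      have h1 : d < radSup f (c • x) := hdr.trans_le (iInf_le _ _)
      rw [radSup] at h1
      obtain ⟨v, hv⟩ := lt_iSup_iff.mp h1
      obtain ⟨hv0, hv'⟩ := lt_iSup_iff.mp hv
      obtain ⟨hp, hdv⟩ := lt_iSup_iff.mp hv'
      have hcv : c ≤ v := by
        rw [← hcd] at hdv
        exact ((ENNReal.ofReal_lt_ofReal_iff hv0).mp hdv).le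
      have := hmono (c • x) (mem_Ioi.mpr hc0) (mem_Ioi.mpr hv0) hcv
      calc d * f x = persp f (c • x) c := by
            rw [persp, smul_inv_smul' hc0.ne' x, hcd]
        _ ≤ persp f (c • x) v := this
        _ ≤ 1 := hp
    have hMle : M ≤ d⁻¹ := by
      refine iSup_le fun x => ?_
      rw [ENNReal.le_inv_iff_mul_le, mul_comm]
      exact key x
    have : d ≤ M⁻¹ := by
      rw [← inv_inv d]
      exact ENNReal.inv_le_inv.mpr hMle
    exact absurd hMd (not_lt.mpr this)
  · refine le_iInf fun y => ?_
    rcases eq_or_ne M 0 with h0 | h0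
    · have hf : ∀ x : E, f x = 0 := fun x =>
        le_antisymm (h0 ▸ le_iSup f x) zero_le
      refine le_of_forall_lt fun c hc => ?_
      set v : ℝ := c.toReal + 1 with hv
      have hv0 : 0 < v := by positivity
      have hcv : c < ENNReal.ofReal v := by
        rw [hv]
        calc c = ENNReal.ofReal c.toReal := (ENNReal.ofReal_toReal hc.ne_top).symm
          _ < ENNReal.ofReal (c.toReal + 1) := by
              rw [ENNReal.ofReal_lt_ofReal_iff (by positivity)]; linarith
      have hp : persp f y v ≤ 1 := by rw [persp, hf]; simp
      refine hcv.trans_le ?_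
      rw [radSup]
      exact le_iSup_of_le v (le_iSup_of_le hv0 (le_iSup_of_le hp le_rfl))
    rcases eq_or_ne M ⊤ with htop | htop
    · simp [htop]
    · set v : ℝ := (M⁻¹).toReal with hv
      have hi0 : M⁻¹ ≠ 0 := by simp [htop]
      have hitop : M⁻¹ ≠ ⊤ := by simp [h0]
      have hv0 : 0 < v := ENNReal.toReal_pos hi0 hitop
      have hvM : ENNReal.ofReal v = M⁻¹ := ENNReal.ofReal_toReal hitop
      have hp : persp f y v ≤ 1 := by
        rw [persp, hvM]
        calc M⁻¹ * f (v⁻¹ • y) ≤ M⁻¹ * M := mul_le_mul_right (le_iSup f _) _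
          _ = 1 := ENNReal.inv_mul_cancel h0 htop
      rw [← hvM, radSup]
      exact le_iSup_of_le v (le_iSup_of_le hv0 (le_iSup_of_le hp le_rfl))

set_option linter.unusedSectionVars false in
/-- For any `f`, `(inf f)·(sup f^Γ) = 1`, and if `f` is upper radial then also
`(sup f)·(inf f^Γ) = 1` (with `∞·0 = 0·∞ = 1`). -/
theorem radial_optimal_values (f : E → ℝ≥0∞) :
    mulConv (⨅ x : E, f x) (⨆ y : E, radSup f y) = 1 ∧
    (UpperRadial f → mulConv (⨆ x : E, f x) (⨅ y : E, radSup f y) = 1) := by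
  constructor
  · rw [sup_radSup]; exact mulConv_inv _
  · intro hur
    rw [inf_radSup f fun y => (hur y).1]
    exact mulConv_inv _
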